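/- Let 0 < α < 1. There exists a constant C > 0 depending only on α such that for every τ > 0, every positive integer n and every twice continuously differentiable function G on [0, nτ], with t_k := kτ and b_i := ∫_{t_i}^{t_{i+1}} s^{−α} ds, the L1 approximation of the Caputo derivative satisfies |(1/Γ(1−α))·∫₀^{t_n} G′(s)·(t_n − s)^{−α} ds − (τ^{−1}/Γ(1−α))·[b₀·G(t_n) − Σ_{i=1}^{n−1}(b_{n−i−1} − b_{n−i})·G(t_i) − b_{n−1}·G(0)]| ≤ C·(max_{0≤t≤t_n} |G″(t)|)·τ^{2−α}. -/

import Mathlib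

open intervalIntegral


open intervalIntegral MeasureTheory Set

lemma stmt11_w_int (α c a b : ℝ) (hα1 : α < 1) :
    IntervalIntegrable (fun s : ℝ => (c - s) ^ (-α)) volume a b := by
  have h2 : IntervalIntegrable (fun x : ℝ => x ^ (-α)) volume (c - a) (c - b) :=
    intervalIntegrable_rpow' (by linarith)
  simpa using h2.comp_sub_left c

lemma stmt11_fw_int (α c a b : ℝ) (hα1 : α < 1) (f : ℝ → ℝ)
    (hf : ContinuousOn f (Set.uIcc a b)) :
    IntervalIntegrable (fun s => f s * (c - s) ^ (-α)) volume a b :=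
  (stmt11_w_int α c a b hα1).continuousOn_mul hf

lemma stmt11_w_deriv (α c s : ℝ) (hs : s < c) :
    HasDerivAt (fun x : ℝ => (c - x) ^ (-α)) (α * (c - s) ^ (-α - 1)) s := by
  have h1 : HasDerivAt (fun x : ℝ => c - x) (-1) s := (hasDerivAt_id s).const_sub c
  have h2 := h1.rpow_const (p := -α) (Or.inl (sub_pos.mpr hs).ne')
  convert h2 using 1
  ring

lemma stmt11_slope (T K τ a : ℝ) (hτ : 0 < τ) (h0a : 0 ≤ a) (haT : a + τ ≤ T)
    (F F' F'' : ℝ → ℝ)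
    (hF : ∀ t ∈ Set.Icc (0:ℝ) T, HasDerivWithinAt F (F' t) (Set.Icc (0:ℝ) T) t)
    (hF' : ∀ t ∈ Set.Icc (0:ℝ) T, HasDerivWithinAt F' (F'' t) (Set.Icc (0:ℝ) T) t)
    (hK : ∀ t ∈ Set.Icc (0:ℝ) T, |F'' t| ≤ K) :
    ∀ s ∈ Set.Icc a (a + τ), |F' s - (F (a + τ) - F a) / τ| ≤ K * τ := by
  have hsub : Set.Icc a (a + τ) ⊆ Set.Icc (0:ℝ) T :=
    Set.Icc_subset_Icc h0a haT
  have hcont : ContinuousOn F (Set.Icc a (a + τ)) := fun t ht =>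
    ((hF t (hsub ht)).continuousWithinAt).mono hsub
  have hderiv : ∀ x ∈ Set.Ioo a (a + τ), HasDerivAt F (F' x) x := by
    intro x hx
    have hx' : x ∈ Set.Icc (0:ℝ) T := hsub (Set.Ioo_subset_Icc_self hx)
    exact (hF x hx').hasDerivAt (Icc_mem_nhds (by linarith [hx.1]) (by linarith [hx.2]))
  obtain ⟨η, hη, hslope⟩ :=
    exists_hasDerivAt_eq_slope F F' (by linarith : a < a + τ) hcont hderiv
  intro s hs
  have hK0 : 0 ≤ K := le_trans (abs_nonneg _) (hK 0 ⟨le_refl 0, by linarith⟩)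
  have hηI : η ∈ Set.Icc a (a + τ) := Set.Ioo_subset_Icc_self hη
  have h1 : |F' s - F' η| ≤ K * |s - η| := by
    have := Convex.norm_image_sub_le_of_norm_hasDerivWithin_le hF'
      (fun t ht => by rw [Real.norm_eq_abs]; exact hK t ht)
      (convex_Icc (0:ℝ) T) (hsub hηI) (hsub hs)
    simpa [Real.norm_eq_abs] using this
  have h2 : F' η = (F (a + τ) - F a) / τ := by
    rw [hslope]; congr 1; ring
  rw [← h2]
  refine le_trans h1 ?_
  apply mul_le_mul_of_nonneg_left _ hK0
  rw [abs_le]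
  constructor <;> [linarith [hs.1, hs.2, hηI.1, hηI.2]; linarith [hs.1, hs.2, hηI.1, hηI.2]]

lemma stmt11_interior (α T K τ a : ℝ) (hα : 0 < α) (hα1 : α < 1) (hτ : 0 < τ)
    (h0a : 0 ≤ a) (haT : a + τ < T)
    (F F' F'' : ℝ → ℝ)
    (hF : ∀ t ∈ Set.Icc (0:ℝ) T, HasDerivWithinAt F (F' t) (Set.Icc (0:ℝ) T) t)
    (hF' : ∀ t ∈ Set.Icc (0:ℝ) T, HasDerivWithinAt F' (F'' t) (Set.Icc (0:ℝ) T) t)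
    (hK : ∀ t ∈ Set.Icc (0:ℝ) T, |F'' t| ≤ K) :
    |∫ s in a..(a + τ), (F' s - (F (a + τ) - F a) / τ) * (T - s) ^ (-α)|
      ≤ K * τ ^ 2 * ((T - (a + τ)) ^ (-α) - (T - a) ^ (-α)) := by
  have hab : a < a + τ := by linarith
  have hK0 : 0 ≤ K := le_trans (abs_nonneg _) (hK 0 ⟨le_refl 0, by linarith⟩)
  have huIcc : Set.uIcc a (a + τ) = Set.Icc a (a + τ) := Set.uIcc_of_le hab.le
  have hsub : Set.Icc a (a + τ) ⊆ Set.Icc (0:ℝ) T := Set.Icc_subset_Icc h0a haT.le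
  set d : ℝ := (F (a + τ) - F a) / τ with hd
  set e : ℝ → ℝ := fun s => F s - F a - d * (s - a) with he
  have hslope := stmt11_slope T K τ a hτ h0a haT.le F F' F'' hF hF' hK
  -- continuity of F, F' on Icc a (a+τ)
  have hFc : ContinuousOn F (Set.Icc a (a + τ)) := fun t ht =>
    ((hF t (hsub ht)).continuousWithinAt).mono hsub
  have hF'c : ContinuousOn F' (Set.Icc a (a + τ)) := fun t ht =>
    ((hF' t (hsub ht)).continuousWithinAt).mono hsub
  -- derivative of e within Icc a (a+τ)
  have he_deriv : ∀ s ∈ Set.Icc a (a + τ),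
      HasDerivWithinAt e (F' s - d) (Set.Icc a (a + τ)) s := by
    intro s hs
    have h1 : HasDerivWithinAt (fun x => F x - F a) (F' s) (Set.Icc a (a + τ)) s :=
      ((hF s (hsub hs)).mono hsub).sub_const (F a)
    have h2 : HasDerivWithinAt (fun x : ℝ => d * (x - a)) (d * 1) (Set.Icc a (a + τ)) s :=
      (((hasDerivAt_id s).sub_const a).hasDerivWithinAt).const_mul d
    have h3 := h1.sub h2
    rw [mul_one] at h3
    exact h3
  -- bound |e| ≤ K τ²
  have he_bound : ∀ s ∈ Set.Icc a (a + τ), |e s| ≤ K * τ ^ 2 := by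
    intro s hs
    have haI : a ∈ Set.Icc a (a + τ) := ⟨le_refl a, hab.le⟩
    have h1 := Convex.norm_image_sub_le_of_norm_hasDerivWithin_le he_deriv
      (fun t ht => by rw [Real.norm_eq_abs]; exact hslope t ht)
      (convex_Icc a (a + τ)) haI hs
    have hea : e a = 0 := by simp [he]
    rw [hea, sub_zero, Real.norm_eq_abs, Real.norm_eq_abs] at h1
    calc |e s| ≤ K * τ * |s - a| := h1
      _ ≤ K * τ * τ := by
          apply mul_le_mul_of_nonneg_left _ (by positivity)
          rw [abs_le]; constructor <;> [linarith [hs.1, hs.2]; linarith [hs.1, hs.2]]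
      _ = K * τ ^ 2 := by ring
  have heb : e (a + τ) = 0 := by
    have : d * τ = F (a + τ) - F a := by rw [hd]; exact div_mul_cancel₀ _ hτ.ne'
    simp only [he, add_sub_cancel_left]
    linarith [this]
  have hea : e a = 0 := by simp [he]
  -- derivative data for integration by parts on Ioo
  have hu_deriv : ∀ x ∈ Set.Ioo (min a (a + τ)) (max a (a + τ)),
      HasDerivAt e (F' x - d) x := by
    rw [min_eq_left hab.le, max_eq_right hab.le]
    intro x hx
    have hx' : x ∈ Set.Icc (0:ℝ) T := hsub (Set.Ioo_subset_Icc_self hx)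
    have h1 : HasDerivAt F (F' x) x :=
      (hF x hx').hasDerivAt (Icc_mem_nhds (by linarith [hx.1]) (by linarith [hx.2]))
    have h2 : HasDerivAt (fun y : ℝ => d * (y - a)) (d * 1) x :=
      (((hasDerivAt_id x).sub_const a)).const_mul d
    have h3 := (h1.sub_const (F a)).sub h2
    rw [mul_one] at h3
    exact h3
  have hv_deriv : ∀ x ∈ Set.Ioo (min a (a + τ)) (max a (a + τ)),
      HasDerivAt (fun s : ℝ => (T - s) ^ (-α)) (α * (T - x) ^ (-α - 1)) x := by
    rw [min_eq_left hab.le, max_eq_right hab.le]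
    intro x hx
    exact stmt11_w_deriv α T x (by linarith [hx.2])
  -- continuity on uIcc
  have hu_cont : ContinuousOn e (Set.uIcc a (a + τ)) := by
    rw [huIcc]
    exact (hFc.sub continuousOn_const).sub
      (continuousOn_const.mul (continuousOn_id.sub continuousOn_const))
  have hv_cont : ContinuousOn (fun s : ℝ => (T - s) ^ (-α)) (Set.uIcc a (a + τ)) := by
    rw [huIcc]
    apply (continuousOn_const.sub continuousOn_id).rpow_const
    intro x hx
    exact Or.inl (sub_pos.mpr (show id x < T by simp only [id_eq]; linarith [hx.2])).ne'
  have hu'_int : IntervalIntegrable (fun s => F' s - d) volume a (a + τ) := by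
    apply ContinuousOn.intervalIntegrable
    rw [huIcc]
    exact hF'c.sub continuousOn_const
  have hv'_cont : ContinuousOn (fun s : ℝ => α * (T - s) ^ (-α - 1)) (Set.Icc a (a + τ)) := by
    apply continuousOn_const.mul
    apply (continuousOn_const.sub continuousOn_id).rpow_const
    intro x hx
    exact Or.inl (sub_pos.mpr (show id x < T by simp only [id_eq]; linarith [hx.2])).ne'
  have hv'_int : IntervalIntegrable (fun s : ℝ => α * (T - s) ^ (-α - 1)) volume a (a + τ) := by
    apply ContinuousOn.intervalIntegrable
    rw [huIcc]; exact hv'_cont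
  -- integration by parts
  have hparts := intervalIntegral.integral_deriv_mul_eq_sub_of_hasDerivAt
    hu_cont hv_cont hu_deriv hv_deriv hu'_int hv'_int
  rw [heb, hea] at hparts
  -- split the integral
  have hint1 : IntervalIntegrable (fun s => (F' s - d) * (T - s) ^ (-α)) volume a (a + τ) := by
    apply stmt11_fw_int α T a (a + τ) hα1
    rw [huIcc]; exact hF'c.sub continuousOn_const
  have hint2 : IntervalIntegrable (fun s => e s * (α * (T - s) ^ (-α - 1))) volume a (a + τ) := by
    apply ContinuousOn.intervalIntegrable
    rw [huIcc]
    exact (hu_cont.mono (by rw [huIcc])).mul hv'_cont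
  have hsplit : (∫ s in a..(a + τ), (F' s - d) * (T - s) ^ (-α))
      = - ∫ s in a..(a + τ), e s * (α * (T - s) ^ (-α - 1)) := by
    have := intervalIntegral.integral_add hint1 hint2
    rw [hparts] at this
    linarith [this]
  rw [hsplit, abs_neg]
  -- bound the remaining integral
  have habs : |∫ s in a..(a + τ), e s * (α * (T - s) ^ (-α - 1))|
      ≤ ∫ s in a..(a + τ), |e s * (α * (T - s) ^ (-α - 1))| :=
    intervalIntegral.abs_integral_le_integral_abs hab.le
  have hmono : (∫ s in a..(a + τ), |e s * (α * (T - s) ^ (-α - 1))|)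
      ≤ ∫ s in a..(a + τ), K * τ ^ 2 * (α * (T - s) ^ (-α - 1)) := by
    apply intervalIntegral.integral_mono_on hab.le hint2.abs (hv'_int.const_mul _)
    intro s hs
    have hTs : 0 < T - s := by linarith [hs.2]
    have hv'nn : 0 ≤ α * (T - s) ^ (-α - 1) :=
      mul_nonneg hα.le (Real.rpow_nonneg hTs.le _)
    rw [abs_mul, abs_of_nonneg hv'nn]
    exact mul_le_mul_of_nonneg_right (he_bound s hs) hv'nn
  have hftc : (∫ s in a..(a + τ), α * (T - s) ^ (-α - 1))
      = (T - (a + τ)) ^ (-α) - (T - a) ^ (-α) := by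
    refine intervalIntegral.integral_eq_sub_of_hasDerivAt
      (f := fun x : ℝ => (T - x) ^ (-α)) ?_ hv'_int
    intro x hx
    rw [huIcc] at hx
    exact stmt11_w_deriv α T x (by linarith [hx.2])
  calc |∫ s in a..(a + τ), e s * (α * (T - s) ^ (-α - 1))|
      ≤ ∫ s in a..(a + τ), K * τ ^ 2 * (α * (T - s) ^ (-α - 1)) := le_trans habs hmono
    _ = K * τ ^ 2 * ((T - (a + τ)) ^ (-α) - (T - a) ^ (-α)) := by
        rw [intervalIntegral.integral_const_mul, hftc]

lemma stmt11_last (α T K τ a : ℝ) (hα : 0 < α) (hα1 : α < 1) (hτ : 0 < τ)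
    (h0a : 0 ≤ a) (haT : a + τ = T)
    (F F' F'' : ℝ → ℝ)
    (hF : ∀ t ∈ Set.Icc (0:ℝ) T, HasDerivWithinAt F (F' t) (Set.Icc (0:ℝ) T) t)
    (hF' : ∀ t ∈ Set.Icc (0:ℝ) T, HasDerivWithinAt F' (F'' t) (Set.Icc (0:ℝ) T) t)
    (hK : ∀ t ∈ Set.Icc (0:ℝ) T, |F'' t| ≤ K) :
    |∫ s in a..(a + τ), (F' s - (F (a + τ) - F a) / τ) * (T - s) ^ (-α)|
      ≤ K * τ * (τ ^ (1 - α) / (1 - α)) := by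
  have hab : a < a + τ := by linarith
  have hK0 : 0 ≤ K := le_trans (abs_nonneg _) (hK 0 ⟨le_refl 0, by linarith⟩)
  have huIcc : Set.uIcc a (a + τ) = Set.Icc a (a + τ) := Set.uIcc_of_le hab.le
  have hsub : Set.Icc a (a + τ) ⊆ Set.Icc (0:ℝ) T := Set.Icc_subset_Icc h0a haT.le
  have hslope := stmt11_slope T K τ a hτ h0a haT.le F F' F'' hF hF' hK
  have hF'c : ContinuousOn F' (Set.Icc a (a + τ)) := fun t ht =>
    ((hF' t (hsub ht)).continuousWithinAt).mono hsub
  set d : ℝ := (F (a + τ) - F a) / τ with hd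
  have hint1 : IntervalIntegrable (fun s => (F' s - d) * (T - s) ^ (-α)) volume a (a + τ) := by
    apply stmt11_fw_int α T a (a + τ) hα1
    rw [huIcc]; exact hF'c.sub continuousOn_const
  have hwint : IntervalIntegrable (fun s : ℝ => (T - s) ^ (-α)) volume a (a + τ) :=
    stmt11_w_int α T a (a + τ) hα1
  have habs : |∫ s in a..(a + τ), (F' s - d) * (T - s) ^ (-α)|
      ≤ ∫ s in a..(a + τ), |(F' s - d) * (T - s) ^ (-α)| :=
    intervalIntegral.abs_integral_le_integral_abs hab.le
  have hmono : (∫ s in a..(a + τ), |(F' s - d) * (T - s) ^ (-α)|)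
      ≤ ∫ s in a..(a + τ), K * τ * (T - s) ^ (-α) := by
    apply intervalIntegral.integral_mono_on hab.le hint1.abs (hwint.const_mul _)
    intro s hs
    have hTs : 0 ≤ T - s := by linarith [hs.2]
    have hwnn : 0 ≤ (T - s) ^ (-α) := Real.rpow_nonneg hTs _
    rw [abs_mul, abs_of_nonneg hwnn]
    exact mul_le_mul_of_nonneg_right (hslope s hs) hwnn
  have hwval : (∫ s in a..(a + τ), (T - s) ^ (-α)) = τ ^ (1 - α) / (1 - α) := by
    have h1 : (∫ s in a..(a + τ), (T - s) ^ (-α))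
        = ∫ x in (T - (a + τ))..(T - a), x ^ (-α) :=
      intervalIntegral.integral_comp_sub_left (fun x : ℝ => x ^ (-α)) T
    rw [h1]
    have h2 : T - (a + τ) = 0 := by linarith
    have h3 : T - a = τ := by linarith
    rw [h2, h3, integral_rpow (Or.inl (by linarith))]
    rw [Real.zero_rpow (by linarith : -α + 1 ≠ 0)]
    rw [show -α + 1 = 1 - α by ring]
    ring
  calc |∫ s in a..(a + τ), (F' s - d) * (T - s) ^ (-α)|
      ≤ ∫ s in a..(a + τ), K * τ * (T - s) ^ (-α) := le_trans habs hmono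
    _ = K * τ * (τ ^ (1 - α) / (1 - α)) := by
        rw [intervalIntegral.integral_const_mul, hwval]

lemma stmt11_core (α : ℝ) (hα : 0 < α) (hα1 : α < 1) (τ : ℝ) (hτ : 0 < τ) (m : ℕ)
    (G G' G'' : ℝ → ℝ) (T : ℝ) (hT : T = ((m:ℝ)+1)*τ)
    (hG : ∀ t ∈ Set.Icc (0:ℝ) T, HasDerivWithinAt G (G' t) (Set.Icc (0:ℝ) T) t)
    (hG' : ∀ t ∈ Set.Icc (0:ℝ) T, HasDerivWithinAt G' (G'' t) (Set.Icc (0:ℝ) T) t)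
    (K : ℝ) (hK : ∀ t ∈ Set.Icc (0:ℝ) T, |G'' t| ≤ K) :
    |(∫ s in (0:ℝ)..T, G' s * (T - s) ^ (-α))
        - ∑ k ∈ Finset.range (m+1), ((G (((k:ℝ)+1)*τ) - G ((k:ℝ)*τ)) / τ)
            * ∫ s in ((k:ℝ)*τ)..(((k:ℝ)+1)*τ), (T - s) ^ (-α)|
      ≤ (1 + 1/(1-α)) * K * τ ^ (2-α) := by
  have hT0 : 0 < T := by rw [hT]; positivity
  have hK0 : 0 ≤ K := le_trans (abs_nonneg _) (hK 0 ⟨le_refl 0, hT0.le⟩)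
  have hG'c : ContinuousOn G' (Set.Icc (0:ℝ) T) := fun t ht =>
    (hG' t ht).continuousWithinAt
  have hsubk : ∀ k : ℕ, k < m + 1 →
      Set.uIcc ((k:ℝ)*τ) (((k:ℝ)+1)*τ) ⊆ Set.Icc (0:ℝ) T := by
    intro k hk
    rw [Set.uIcc_of_le (by nlinarith : (k:ℝ)*τ ≤ ((k:ℝ)+1)*τ)]
    apply Set.Icc_subset_Icc (by positivity)
    rw [hT]
    have : (k:ℝ) + 1 ≤ (m:ℝ) + 1 := by
      have : (k:ℝ) ≤ (m:ℝ) := by exact_mod_cast Nat.lt_succ_iff.mp hk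
      linarith
    nlinarith
  have hIk_int : ∀ k : ℕ, k < m + 1 →
      IntervalIntegrable (fun s => G' s * (T - s) ^ (-α)) volume ((k:ℝ)*τ) (((k:ℝ)+1)*τ) := by
    intro k hk
    exact stmt11_fw_int α T _ _ hα1 G' (hG'c.mono (hsubk k hk))
  have hsplit : (∑ k ∈ Finset.range (m+1),
        ∫ s in ((k:ℝ)*τ)..(((k:ℝ)+1)*τ), G' s * (T - s) ^ (-α))
      = ∫ s in (0:ℝ)..T, G' s * (T - s) ^ (-α) := by
    have h := intervalIntegral.sum_integral_adjacent_intervals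
      (a := fun k : ℕ => (k:ℝ)*τ) (μ := volume)
      (f := fun s => G' s * (T - s) ^ (-α)) (n := m+1) ?_
    · have h0 : ((0:ℕ):ℝ)*τ = 0 := by norm_num
      have hm : (((m+1:ℕ)):ℝ)*τ = T := by rw [hT]; push_cast; ring
      rw [h0, hm] at h
      rw [← h]
      apply Finset.sum_congr rfl
      intro k _
      have hc : (((k+1:ℕ)):ℝ)*τ = ((k:ℝ)+1)*τ := by push_cast; ring
      rw [hc]
    · intro k hk
      have hc : (((k+1:ℕ)):ℝ)*τ = ((k:ℝ)+1)*τ := by push_cast; ring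
      rw [hc]
      exact hIk_int k hk
  have hdiff : (∫ s in (0:ℝ)..T, G' s * (T - s) ^ (-α))
        - ∑ k ∈ Finset.range (m+1), ((G (((k:ℝ)+1)*τ) - G ((k:ℝ)*τ)) / τ)
            * ∫ s in ((k:ℝ)*τ)..(((k:ℝ)+1)*τ), (T - s) ^ (-α)
      = ∑ k ∈ Finset.range (m+1),
          ∫ s in ((k:ℝ)*τ)..(((k:ℝ)+1)*τ),
            (G' s - (G (((k:ℝ)+1)*τ) - G ((k:ℝ)*τ)) / τ) * (T - s) ^ (-α) := by
    rw [← hsplit, ← Finset.sum_sub_distrib]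
    apply Finset.sum_congr rfl
    intro k hk
    have hw := stmt11_w_int α T ((k:ℝ)*τ) (((k:ℝ)+1)*τ) hα1
    rw [eq_comm]
    have hbody : ∀ s : ℝ, (G' s - (G (((k:ℝ)+1)*τ) - G ((k:ℝ)*τ)) / τ) * (T - s) ^ (-α)
        = G' s * (T - s) ^ (-α)
          - ((G (((k:ℝ)+1)*τ) - G ((k:ℝ)*τ)) / τ) * (T - s) ^ (-α) := by
      intro s; ring
    simp only [hbody]
    rw [intervalIntegral.integral_sub (hIk_int k (Finset.mem_range.mp hk))
      (hw.const_mul _), intervalIntegral.integral_const_mul]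
  rw [hdiff]
  -- bound each term
  have hbound : ∀ k : ℕ, k < m →
      |∫ s in ((k:ℝ)*τ)..(((k:ℝ)+1)*τ),
          (G' s - (G (((k:ℝ)+1)*τ) - G ((k:ℝ)*τ)) / τ) * (T - s) ^ (-α)|
        ≤ K * τ ^ 2 * ((T - ((k:ℝ)+1)*τ) ^ (-α) - (T - (k:ℝ)*τ) ^ (-α)) := by
    intro k hk
    have hc : ((k:ℝ)+1)*τ = (k:ℝ)*τ + τ := by ring
    rw [hc]
    have haT : (k:ℝ)*τ + τ < T := by
      rw [hT]
      have : (k:ℝ) + 1 < (m:ℝ) + 1 := by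
        have : (k:ℝ) < (m:ℝ) := by exact_mod_cast hk
        linarith
      nlinarith
    exact stmt11_interior α T K τ ((k:ℝ)*τ) hα hα1 hτ (by positivity) haT G G' G'' hG hG' hK
  have hlast :
      |∫ s in ((m:ℝ)*τ)..(((m:ℝ)+1)*τ),
          (G' s - (G (((m:ℝ)+1)*τ) - G ((m:ℝ)*τ)) / τ) * (T - s) ^ (-α)|
        ≤ K * τ * (τ ^ (1-α) / (1-α)) := by
    have hc : ((m:ℝ)+1)*τ = (m:ℝ)*τ + τ := by ring
    rw [hc]
    exact stmt11_last α T K τ ((m:ℝ)*τ) hα hα1 hτ (by positivity) (by rw [hT]; ring)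
      G G' G'' hG hG' hK
  -- assemble
  have h1 : |∑ k ∈ Finset.range (m+1),
        ∫ s in ((k:ℝ)*τ)..(((k:ℝ)+1)*τ),
          (G' s - (G (((k:ℝ)+1)*τ) - G ((k:ℝ)*τ)) / τ) * (T - s) ^ (-α)|
      ≤ (∑ k ∈ Finset.range m,
          |∫ s in ((k:ℝ)*τ)..(((k:ℝ)+1)*τ),
            (G' s - (G (((k:ℝ)+1)*τ) - G ((k:ℝ)*τ)) / τ) * (T - s) ^ (-α)|)
        + |∫ s in ((m:ℝ)*τ)..(((m:ℝ)+1)*τ),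
            (G' s - (G (((m:ℝ)+1)*τ) - G ((m:ℝ)*τ)) / τ) * (T - s) ^ (-α)| := by
    refine le_trans (Finset.abs_sum_le_sum_abs _ _) ?_
    rw [Finset.sum_range_succ]
  have h2 : (∑ k ∈ Finset.range m,
        |∫ s in ((k:ℝ)*τ)..(((k:ℝ)+1)*τ),
          (G' s - (G (((k:ℝ)+1)*τ) - G ((k:ℝ)*τ)) / τ) * (T - s) ^ (-α)|)
      ≤ ∑ k ∈ Finset.range m,
          (K * τ ^ 2 * ((T - ((k:ℝ)+1)*τ) ^ (-α) - (T - (k:ℝ)*τ) ^ (-α))) :=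
    Finset.sum_le_sum fun k hk => hbound k (Finset.mem_range.mp hk)
  have h3 : (∑ k ∈ Finset.range m,
        (K * τ ^ 2 * ((T - ((k:ℝ)+1)*τ) ^ (-α) - (T - (k:ℝ)*τ) ^ (-α))))
      = K * τ ^ 2 * ((T - (m:ℝ)*τ) ^ (-α) - T ^ (-α)) := by
    rw [← Finset.mul_sum]
    congr 1
    have htel := Finset.sum_range_sub (fun j : ℕ => (T - (j:ℝ)*τ) ^ (-α)) m
    push_cast at htel
    rw [htel]
    norm_num
  have hTm : T - (m:ℝ)*τ = τ := by rw [hT]; ring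
  have hTnn : 0 ≤ T ^ (-α) := Real.rpow_nonneg hT0.le _
  have e1 : τ ^ 2 * τ ^ (-α) = τ ^ (2-α) := by
    rw [show (2:ℝ) - α = (((2:ℕ):ℝ)) + (-α) by push_cast; ring, Real.rpow_add hτ,
      Real.rpow_natCast]
  have e2 : τ * τ ^ (1-α) = τ ^ (2-α) := by
    nth_rewrite 1 [← Real.rpow_one τ]
    rw [← Real.rpow_add hτ]
    congr 1
    ring
  have hpos : (0:ℝ) < 1 - α := by linarith
  calc |∑ k ∈ Finset.range (m+1),
        ∫ s in ((k:ℝ)*τ)..(((k:ℝ)+1)*τ),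
          (G' s - (G (((k:ℝ)+1)*τ) - G ((k:ℝ)*τ)) / τ) * (T - s) ^ (-α)|
      ≤ K * τ ^ 2 * ((T - (m:ℝ)*τ) ^ (-α) - T ^ (-α)) + K * τ * (τ ^ (1-α) / (1-α)) := by
        refine le_trans h1 ?_
        exact add_le_add (le_trans h2 (le_of_eq h3)) hlast
    _ ≤ K * τ ^ 2 * τ ^ (-α) + K * τ * (τ ^ (1-α) / (1-α)) := by
        rw [hTm]
        have : K * τ ^ 2 * (τ ^ (-α) - T ^ (-α)) ≤ K * τ ^ 2 * τ ^ (-α) := by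
          apply mul_le_mul_of_nonneg_left _ (by positivity)
          linarith
        linarith
    _ = (1 + 1/(1-α)) * K * τ ^ (2-α) := by
        rw [mul_assoc K, e1]
        field_simp
        ring_nf
        rw [mul_assoc K τ, e2]
        ring

lemma stmt11_abel (m : ℕ) (g c : ℕ → ℝ) :
    c 0 * g (m+1) - (∑ i ∈ Finset.Icc 1 m, (c (m+1-i-1) - c (m+1-i)) * g i) - c m * g 0
      = ∑ k ∈ Finset.range (m+1), (g (k+1) - g k) * c (m-k) := by
  have hIcc : ∑ i ∈ Finset.Icc 1 m, (c (m+1-i-1) - c (m+1-i)) * g i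
      = ∑ k ∈ Finset.range m, (c (m-k-1) - c (m-k)) * g (k+1) := by
    rw [← Finset.Ico_add_one_right_eq_Icc, Finset.sum_Ico_eq_sum_range]
    apply Finset.sum_congr rfl
    intro k hk
    have hk' : k < m := Finset.mem_range.mp hk
    have h1 : m + 1 - (1 + k) - 1 = m - k - 1 := by omega
    have h2 : m + 1 - (1 + k) = m - k := by omega
    rw [h1, h2, add_comm 1 k]
  have h1 : ∑ k ∈ Finset.range (m+1), (g (k+1) - g k) * c (m-k)
      = (∑ k ∈ Finset.range (m+1), g (k+1) * c (m-k))
        - ∑ k ∈ Finset.range (m+1), g k * c (m-k) := by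
    rw [← Finset.sum_sub_distrib]
    apply Finset.sum_congr rfl
    intro k _; ring
  have h2 : ∑ k ∈ Finset.range (m+1), g (k+1) * c (m-k)
      = (∑ k ∈ Finset.range m, g (k+1) * c (m-k)) + g (m+1) * c 0 := by
    rw [Finset.sum_range_succ, Nat.sub_self]
  have h3 : ∑ k ∈ Finset.range (m+1), g k * c (m-k)
      = (∑ k ∈ Finset.range m, g (k+1) * c (m-k-1)) + g 0 * c m := by
    rw [Finset.sum_range_succ']
    have : ∀ k ∈ Finset.range m, g (k+1) * c (m-(k+1)) = g (k+1) * c (m-k-1) := by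
      intro k hk
      have h : m - (k+1) = m - k - 1 := by omega
      rw [h]
    rw [Finset.sum_congr rfl this, Nat.sub_zero]
  rw [hIcc, h1, h2, h3]
  have h4 : (∑ k ∈ Finset.range m, g (k+1) * c (m-k))
      - (∑ k ∈ Finset.range m, g (k+1) * c (m-k-1))
      = ∑ k ∈ Finset.range m, (c (m-k-1) - c (m-k)) * (-(g (k+1))) := by
    rw [← Finset.sum_sub_distrib]
    apply Finset.sum_congr rfl; intro k _; ring
  have h5 : ∑ k ∈ Finset.range m, (c (m-k-1) - c (m-k)) * (-(g (k+1)))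
      = - ∑ k ∈ Finset.range m, (c (m-k-1) - c (m-k)) * g (k+1) := by
    rw [← Finset.sum_neg_distrib]
    apply Finset.sum_congr rfl; intro k _; ring
  linarith [h4, h5]

/-- Truncation error of the L1 approximation of the Caputo derivative of order `α`:
there is a constant `C > 0` depending only on `α` such that for every step `τ > 0`,
level `n ≥ 1`, and `C²` function `G` on `[0, nτ]` (with first and second derivatives
`G'`, `G''`, and `K` any bound for `|G''|` on `[0, nτ]`),
`|(1/Γ(1-α)) ∫₀^{nτ} G'(s)(nτ - s)^{-α} ds - (τ⁻¹/Γ(1-α))·[b₀ G(nτ)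
   - ∑_{i=1}^{n-1}(b_{n-i-1} - b_{n-i}) G(iτ) - b_{n-1} G(0)]| ≤ C·K·τ^{2-α}`,
where `bᵢ = ∫_{iτ}^{(i+1)τ} s^{-α} ds`. -/
theorem stmt_11 (α : ℝ) (hα : 0 < α) (hα1 : α < 1) :
    ∃ C > 0, ∀ (τ : ℝ), 0 < τ → ∀ (n : ℕ), 0 < n →
      ∀ (G G' G'' : ℝ → ℝ),
        (∀ t ∈ Set.Icc (0 : ℝ) ((n : ℝ) * τ),
          HasDerivWithinAt G (G' t) (Set.Icc (0 : ℝ) ((n : ℝ) * τ)) t) →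
        (∀ t ∈ Set.Icc (0 : ℝ) ((n : ℝ) * τ),
          HasDerivWithinAt G' (G'' t) (Set.Icc (0 : ℝ) ((n : ℝ) * τ)) t) →
        ContinuousOn G'' (Set.Icc (0 : ℝ) ((n : ℝ) * τ)) →
        ∀ K : ℝ, (∀ t ∈ Set.Icc (0 : ℝ) ((n : ℝ) * τ), |G'' t| ≤ K) →
        ∀ b : ℕ → ℝ,
          (∀ i : ℕ, b i = ∫ s in ((i : ℝ) * τ)..(((i : ℝ) + 1) * τ), s ^ (-α)) →
          |(1 / Real.Gamma (1 - α)) *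
                (∫ s in (0 : ℝ)..((n : ℝ) * τ), G' s * ((n : ℝ) * τ - s) ^ (-α))
              - τ⁻¹ / Real.Gamma (1 - α) *
                (b 0 * G ((n : ℝ) * τ)
                  - (∑ i ∈ Finset.Icc 1 (n - 1), (b (n - i - 1) - b (n - i)) * G ((i : ℝ) * τ))
                  - b (n - 1) * G 0)|
            ≤ C * K * τ ^ (2 - α) := by
  have hΓ : 0 < Real.Gamma (1 - α) := Real.Gamma_pos_of_pos (by linarith)
  have hC : 0 < (1 / Real.Gamma (1 - α)) * (1 + 1 / (1 - α)) := by
    apply mul_pos (by positivity)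
    have : 0 < 1 - α := by linarith
    positivity
  refine ⟨(1 / Real.Gamma (1 - α)) * (1 + 1 / (1 - α)), hC, ?_⟩
  intro τ hτ n hn G G' G'' hG hG' hG''c K hK b hb
  obtain ⟨m, rfl⟩ : ∃ m, n = m + 1 := ⟨n - 1, by omega⟩
  simp only [Nat.add_sub_cancel]
  push_cast at hG hG' hK ⊢
  -- core estimate
  have hcore := stmt11_core α hα hα1 τ hτ m G G' G'' (((m:ℝ) + 1) * τ) rfl hG hG' K hK
  -- substitution for b
  have hbw : ∀ k : ℕ, k ≤ m → b (m - k)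
      = ∫ s in ((k:ℝ) * τ)..(((k:ℝ) + 1) * τ), (((m:ℝ) + 1) * τ - s) ^ (-α) := by
    intro k hk
    rw [hb (m - k)]
    rw [show ((((m - k : ℕ)):ℝ)) * τ = ((m:ℝ) + 1) * τ - (((k:ℝ)) + 1) * τ by
      rw [Nat.cast_sub hk]; ring]
    rw [show ((((m - k : ℕ)):ℝ) + 1) * τ = ((m:ℝ) + 1) * τ - ((k:ℝ)) * τ by
      rw [Nat.cast_sub hk]; ring]
    exact (intervalIntegral.integral_comp_sub_left (fun x : ℝ => x ^ (-α))
      (((m:ℝ) + 1) * τ)).symm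
  -- Abel summation
  have habel := stmt11_abel m (fun k : ℕ => G ((k:ℝ) * τ)) b
  simp only [Nat.cast_zero, zero_mul] at habel
  push_cast at habel
  rw [habel]
  -- rewrite the sum
  have hsum : τ⁻¹ * ∑ k ∈ Finset.range (m + 1),
        (G (((k:ℝ) + 1) * τ) - G ((k:ℝ) * τ)) * b (m - k)
      = ∑ k ∈ Finset.range (m + 1), ((G (((k:ℝ) + 1) * τ) - G ((k:ℝ) * τ)) / τ)
          * ∫ s in ((k:ℝ) * τ)..(((k:ℝ) + 1) * τ), (((m:ℝ) + 1) * τ - s) ^ (-α) := by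
    rw [Finset.mul_sum]
    apply Finset.sum_congr rfl
    intro k hk
    rw [hbw k (Nat.lt_succ_iff.mp (Finset.mem_range.mp hk))]
    ring
  have hre : (1 / Real.Gamma (1 - α)) *
        (∫ s in (0:ℝ)..(((m:ℝ) + 1) * τ), G' s * (((m:ℝ) + 1) * τ - s) ^ (-α))
      - τ⁻¹ / Real.Gamma (1 - α) *
        ∑ k ∈ Finset.range (m + 1), (G (((k:ℝ) + 1) * τ) - G ((k:ℝ) * τ)) * b (m - k)
      = (1 / Real.Gamma (1 - α)) *
        ((∫ s in (0:ℝ)..(((m:ℝ) + 1) * τ), G' s * (((m:ℝ) + 1) * τ - s) ^ (-α))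
          - τ⁻¹ * ∑ k ∈ Finset.range (m + 1),
              (G (((k:ℝ) + 1) * τ) - G ((k:ℝ) * τ)) * b (m - k)) := by ring
  rw [hre, hsum, abs_mul, abs_of_pos (by positivity : (0:ℝ) < 1 / Real.Gamma (1 - α))]
  calc (1 / Real.Gamma (1 - α)) * |(∫ s in (0:ℝ)..(((m:ℝ) + 1) * τ),
          G' s * (((m:ℝ) + 1) * τ - s) ^ (-α))
        - ∑ k ∈ Finset.range (m + 1), ((G (((k:ℝ) + 1) * τ) - G ((k:ℝ) * τ)) / τ)
            * ∫ s in ((k:ℝ) * τ)..(((k:ℝ) + 1) * τ), (((m:ℝ) + 1) * τ - s) ^ (-α)|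
      ≤ (1 / Real.Gamma (1 - α)) * ((1 + 1 / (1 - α)) * K * τ ^ (2 - α)) :=
        mul_le_mul_of_nonneg_left hcore (by positivity)
    _ = (1 / Real.Gamma (1 - α)) * (1 + 1 / (1 - α)) * K * τ ^ (2 - α) := by ring
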